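/- Let p be an odd prime number such that 2^{p−1} ≡ 1 (mod p^2). Then there exists at least one prime factor q1 of p − 2 such that q1^{p−1} ≢ 1 (mod p^2). -/

import Mathlib

/-- Binomial expansion when `a` squares to zero. -/
lemma sq_zero_add_pow {R : Type*} [CommRing R] (a b : R) (h : a ^ 2 = 0) :
    ∀ n : ℕ, (a + b) ^ (n + 1) = b ^ (n + 1) + (n + 1 : ℕ) * a * b ^ n := by
  intro n
  induction n with
  | zero => simp; ring
  | succ n ih =>
      have : (a + b) ^ (n + 2) = (a + b) ^ (n + 1) * (a + b) := by ring
      rw [this, ih]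
      push_cast
      linear_combination (↑n + 1) * b ^ n * h

lemma prod_pow_eq_one {M : ℕ} (k : ℕ) :
    ∀ l : List ℕ, (∀ q ∈ l, ((q : ZMod M)) ^ k = 1) → ((l.prod : ℕ) : ZMod M) ^ k = 1 := by
  intro l
  induction l with
  | nil => simp
  | cons q l ih =>
      intro h
      have hq := h q List.mem_cons_self
      have hl := ih fun x hx => h x (List.mem_cons_of_mem q hx)
      simp only [List.prod_cons]
      rw [Nat.cast_mul, mul_pow, hq, hl, mul_one]

theorem stmt_19 (p : ℕ) (hp : p.Prime) (hodd : Odd p)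
    (hw : 2 ^ (p - 1) ≡ 1 [MOD p ^ 2]) :
    ∃ q1 : ℕ, q1.Prime ∧ q1 ∣ p - 2 ∧ ¬ (q1 ^ (p - 1) ≡ 1 [MOD p ^ 2]) := by
  by_contra hcon
  push_neg at hcon
  have hp2 : p ≠ 2 := by rintro rfl; exact (Nat.not_odd_iff_even.mpr (by norm_num)) hodd
  have hp3 : 3 ≤ p := by
    rcases hp.two_le.lt_or_eq with h | h
    · omega
    · omega
  haveI : NeZero (p ^ 2) := ⟨pow_ne_zero 2 hp.pos.ne'⟩
  -- all prime factors of p-2 have (p-1)-th power ≡ 1, so (p-2)^(p-1) ≡ 1 mod p^2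
  have hm : ((p - 2 : ℕ) : ZMod (p ^ 2)) ^ (p - 1) = 1 := by
    have hne : p - 2 ≠ 0 := by omega
    have := prod_pow_eq_one (M := p ^ 2) (p - 1) (p - 2).primeFactorsList ?_
    · rwa [Nat.prod_primeFactorsList hne] at this
    · intro q hq
      have hqp : q.Prime := Nat.prime_of_mem_primeFactorsList hq
      have hqd : q ∣ p - 2 := Nat.dvd_of_mem_primeFactorsList hq
      have := hcon q hqp hqd
      have := (ZMod.natCast_eq_natCast_iff _ _ _).mpr this
      push_cast at this
      exact this
  -- expand in ZMod p^2
  set R := ZMod (p ^ 2)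
  have ha : ((p : R)) ^ 2 = 0 := by
    rw [← Nat.cast_pow, ZMod.natCast_self]
  have hcast : ((p - 2 : ℕ) : R) = (p : R) + (-2) := by
    push_cast [Nat.cast_sub (by omega : 2 ≤ p)]
    ring
  have hexp : p - 1 = (p - 2) + 1 := by omega
  have key : ((p - 2 : ℕ) : R) ^ (p - 1)
      = (-2 : R) ^ (p - 1) + ((p - 2 + 1 : ℕ) : R) * (p : R) * (-2 : R) ^ (p - 2) := by
    rw [hcast, hexp]
    exact sq_zero_add_pow (p : R) (-2) ha (p - 2)
  have heven : Even (p - 1) := by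
    rcases hodd with ⟨k, hk⟩
    exact ⟨k, by omega⟩
  have hneg : (-2 : R) ^ (p - 1) = (2 : R) ^ (p - 1) := heven.neg_pow 2
  have h2 : (2 : R) ^ (p - 1) = 1 := by
    have := (ZMod.natCast_eq_natCast_iff _ _ _).mpr hw
    push_cast at this
    exact this
  have hzero : ((p - 2 + 1 : ℕ) : R) * (p : R) * (-2 : R) ^ (p - 2) = 0 := by
    have hk := key
    rw [hm, hneg, h2] at hk
    exact (left_eq_add.mp hk)
  -- units
  have hu1 : IsUnit ((p - 2 + 1 : ℕ) : R) := by
    rw [ZMod.isUnit_iff_coprime]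
    have h1 : Nat.Coprime (p - 2 + 1) p := by
      rw [Nat.coprime_comm]
      exact (hp.coprime_iff_not_dvd).mpr (Nat.not_dvd_of_pos_of_lt (by omega) (by omega))
    exact h1.pow_right 2
  have hu2 : IsUnit ((-2 : R) ^ (p - 2)) := by
    apply IsUnit.pow
    apply IsUnit.neg
    have : IsUnit ((2 : ℕ) : R) := by
      rw [ZMod.isUnit_iff_coprime]
      have h1 : Nat.Coprime 2 p := by
        rw [Nat.coprime_comm]
        apply (hp.coprime_iff_not_dvd).mpr
        intro h
        exact absurd (Nat.le_of_dvd (by norm_num) h) (by omega)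
      exact h1.pow_right 2
    simpa using this
  have hpz : (p : R) = 0 := by
    have h : ((p - 2 + 1 : ℕ) : R) * (-2 : R) ^ (p - 2) * (p : R) = 0 := by
      linear_combination hzero
    exact ((hu1.mul hu2).mul_right_eq_zero).mp h
  have : (p : R) ≠ 0 := by
    intro h
    rw [ZMod.natCast_eq_zero_iff] at h
    have hd := h
    exact absurd (Nat.le_of_dvd hp.pos hd) (by nlinarith [hp.two_le])
  exact this hpz
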